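/- Let β = (β_n) be a Cantor real base. The map x ↦ d_β(x) from [0,1] to digit sequences is strictly increasing: for x, y ∈ [0,1], x < y if and only if d_β(x) <_lex d_β(y). -/

import Mathlib

open Filter

/-- Product of the first `n+1` terms of the base sequence. -/
noncomputable def cprod (β : ℕ → ℝ) (n : ℕ) : ℝ := ∏ i ∈ Finset.range (n+1), β i

/-- A Cantor real base: all terms exceed 1 and the partial products tend to infinity. -/
def IsCantorBase (β : ℕ → ℝ) : Prop :=
  (∀ n, 1 < β n) ∧ Tendsto (cprod β) atTop atTop

/-- Value of a real-digit sequence in a Cantor base. -/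
noncomputable def valB (β : ℕ → ℝ) (a : ℕ → ℝ) : ℝ := ∑' n, a n / cprod β n

/-- Value of a natural-digit sequence in a Cantor base. -/
noncomputable def valN (β : ℕ → ℝ) (a : ℕ → ℕ) : ℝ := valB β (fun n => (a n : ℝ))

/-- Remainders of the greedy algorithm. -/
noncomputable def greedyRem (β : ℕ → ℝ) (x : ℝ) : ℕ → ℝ
  | 0 => β 0 * x - ⌊β 0 * x⌋
  | n+1 => β (n+1) * greedyRem β x n - ⌊β (n+1) * greedyRem β x n⌋

/-- Digits of the greedy expansion. -/
noncomputable def greedy (β : ℕ → ℝ) (x : ℝ) : ℕ → ℕ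
  | 0 => (⌊β 0 * x⌋).toNat
  | n+1 => (⌊β (n+1) * greedyRem β x n⌋).toNat

/-- Remainders of the quasi-greedy algorithm started at `1`:
at each step the largest digit keeping the remainder strictly positive is chosen. -/
noncomputable def qRem (β : ℕ → ℝ) : ℕ → ℝ
  | 0 => β 0 - (⌈β 0⌉ - 1)
  | n+1 => β (n+1) * qRem β n - (⌈β (n+1) * qRem β n⌉ - 1)

/-- Digits of the quasi-greedy expansion of `1`. -/
noncomputable def quasiGreedy (β : ℕ → ℝ) : ℕ → ℕ
  | 0 => (⌈β 0⌉ - 1).toNat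
  | n+1 => (⌈β (n+1) * qRem β n⌉ - 1).toNat

/-- The `n`-shifted base `β^{(n)}`. -/
def shiftBase (β : ℕ → ℝ) (n : ℕ) : ℕ → ℝ := fun k => β (n + k)

/-- The `n`-fold shift `σ^n` of a digit sequence. -/
def shiftSeq (a : ℕ → ℕ) (n : ℕ) : ℕ → ℕ := fun k => a (n + k)

/-- Strict lexicographic order on digit sequences. -/
def LexLt (a b : ℕ → ℕ) : Prop := ∃ ℓ, (∀ k, k < ℓ → a k = b k) ∧ a ℓ < b ℓ

/-- Lexicographic order on digit sequences. -/
def LexLe (a b : ℕ → ℕ) : Prop := LexLt a b ∨ a = b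

/-- The set of greedy expansions of points of `[0,1)`. -/
def Dset (β : ℕ → ℝ) : Set (ℕ → ℕ) := {a | ∃ x ∈ Set.Ico (0:ℝ) 1, a = greedy β x}

section Aux
variable {β : ℕ → ℝ} {x y : ℝ}

lemma cprod_pos (hb : ∀ n, 1 < β n) (n : ℕ) : 0 < cprod β n :=
  Finset.prod_pos fun i _ => lt_trans one_pos (hb i)

lemma cprod_succ (n : ℕ) : cprod β (n+1) = cprod β n * β (n+1) :=
  Finset.prod_range_succ _ _

lemma greedyRem_zero : greedyRem β x 0 = β 0 * x - ⌊β 0 * x⌋ := by rw [greedyRem]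

lemma greedyRem_succ (n : ℕ) : greedyRem β x (n+1)
    = β (n+1) * greedyRem β x n - ⌊β (n+1) * greedyRem β x n⌋ := by rw [greedyRem]

lemma rem_nonneg (n : ℕ) : 0 ≤ greedyRem β x n := by
  cases n with
  | zero => exact Int.fract_nonneg (β 0 * x)
  | succ n => exact Int.fract_nonneg (β (n+1) * greedyRem β x n)

lemma rem_lt_one (n : ℕ) : greedyRem β x n < 1 := by
  cases n with
  | zero => exact Int.fract_lt_one (β 0 * x)
  | succ n => exact Int.fract_lt_one (β (n+1) * greedyRem β x n)

lemma floor_nonneg0 (hb : ∀ n, 1 < β n) (hx : 0 ≤ x) : 0 ≤ ⌊β 0 * x⌋ :=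
  Int.floor_nonneg.2 (mul_nonneg (le_of_lt (lt_trans one_pos (hb 0))) hx)

lemma floor_nonnegS (hb : ∀ n, 1 < β n) (n : ℕ) :
    0 ≤ ⌊β (n+1) * greedyRem β x n⌋ :=
  Int.floor_nonneg.2 (mul_nonneg (le_of_lt (lt_trans one_pos (hb (n+1)))) (rem_nonneg n))

lemma greedy_cast0 (hb : ∀ n, 1 < β n) (hx : 0 ≤ x) :
    ((greedy β x 0 : ℤ)) = ⌊β 0 * x⌋ := by
  simp [greedy, Int.toNat_of_nonneg (floor_nonneg0 hb hx)]

lemma greedy_castS (hb : ∀ n, 1 < β n) (n : ℕ) :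
    ((greedy β x (n+1) : ℤ)) = ⌊β (n+1) * greedyRem β x n⌋ := by
  simp [greedy, Int.toNat_of_nonneg (floor_nonnegS hb n)]

lemma rem_sub (hb : ∀ n, 1 < β n) (hx : 0 ≤ x) (hy : 0 ≤ y) :
    ∀ n, (∀ k, k ≤ n → greedy β x k = greedy β y k) →
    greedyRem β x n - greedyRem β y n = cprod β n * (x - y) := by
  intro n
  induction n with
  | zero =>
    intro h
    have h0 : ((⌊β 0 * x⌋ : ℝ)) = ((⌊β 0 * y⌋ : ℤ) : ℝ) := by
      exact_mod_cast congrArg (fun z : ℤ => (z : ℝ))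
        (by rw [← greedy_cast0 hb hx, ← greedy_cast0 hb hy, h 0 le_rfl])
    have hc : cprod β 0 = β 0 := by simp [cprod]
    rw [greedyRem_zero (x := x), greedyRem_zero (x := y), h0, hc]
    ring
  | succ n ih =>
    intro h
    have hprev := ih (fun k hk => h k (le_trans hk (Nat.le_succ n)))
    have hf : ((⌊β (n+1) * greedyRem β x n⌋ : ℝ)) = ((⌊β (n+1) * greedyRem β y n⌋ : ℤ) : ℝ) := by
      exact_mod_cast congrArg (fun z : ℤ => (z : ℝ))
        (by rw [← greedy_castS hb n, ← greedy_castS hb n, h (n+1) le_rfl])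
    rw [greedyRem_succ (x := x), greedyRem_succ (x := y), hf, cprod_succ]
    calc β (n+1) * greedyRem β x n - ↑⌊β (n+1) * greedyRem β y n⌋ -
        (β (n+1) * greedyRem β y n - ↑⌊β (n+1) * greedyRem β y n⌋)
        = β (n+1) * (greedyRem β x n - greedyRem β y n) := by ring
      _ = β (n+1) * (cprod β n * (x - y)) := by rw [hprev]
      _ = cprod β n * β (n+1) * (x - y) := by ring

lemma x_eq (hb : ∀ n, 1 < β n) (hx : 0 ≤ x) (n : ℕ) :
    x = (∑ k ∈ Finset.range (n+1), (greedy β x k : ℝ) / cprod β k)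
        + greedyRem β x n / cprod β n := by
  induction n with
  | zero =>
    have hb0 : (0:ℝ) < β 0 := lt_trans one_pos (hb 0)
    have hc : cprod β 0 = β 0 := by simp [cprod]
    have hd : ((greedy β x 0 : ℝ)) = ((⌊β 0 * x⌋ : ℤ) : ℝ) := by
      exact_mod_cast congrArg (fun z : ℤ => (z : ℝ)) (greedy_cast0 hb hx)
    rw [Finset.range_one, Finset.sum_singleton, hc, hd, greedyRem_zero]
    field_simp
    ring
  | succ n ih =>
    have hbn : (0:ℝ) < β (n+1) := lt_trans one_pos (hb (n+1))
    have hcn : (0:ℝ) < cprod β n := cprod_pos hb n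
    have hd : ((greedy β x (n+1) : ℝ)) = ((⌊β (n+1) * greedyRem β x n⌋ : ℤ) : ℝ) := by
      exact_mod_cast congrArg (fun z : ℤ => (z : ℝ)) (greedy_castS hb n)
    have hrec : greedyRem β x n
        = (greedy β x (n+1) : ℝ) / β (n+1) + greedyRem β x (n+1) / β (n+1) := by
      rw [hd, greedyRem_succ]
      field_simp
      ring
    conv_lhs => rw [ih, hrec]
    rw [Finset.sum_range_succ _ (n+1), cprod_succ]
    field_simp
    ring

end Aux

theorem stmt_8 (β : ℕ → ℝ) (hβ : IsCantorBase β) (x y : ℝ)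
    (hx : x ∈ Set.Icc (0:ℝ) 1) (hy : y ∈ Set.Icc (0:ℝ) 1) :
    x < y ↔ LexLt (greedy β x) (greedy β y) := by
  obtain ⟨hb, htend⟩ := hβ
  have hx0 : (0:ℝ) ≤ x := hx.1
  have hy0 : (0:ℝ) ≤ y := hy.1
  constructor
  · intro hxy
    by_cases hall : ∀ n, greedy β x n = greedy β y n
    · exfalso
      obtain ⟨n, hn⟩ := (tendsto_atTop.1 htend (1/(y - x))).exists
      have hd := rem_sub hb hx0 hy0 n (fun k _ => hall k)
      have h1 : greedyRem β y n - greedyRem β x n < 1 :=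
        lt_of_le_of_lt (by linarith [rem_nonneg (β := β) (x := x) n]) (rem_lt_one n)
      have hyx : (0:ℝ) < y - x := by linarith
      have h2 : cprod β n * (y - x) < 1 := by nlinarith [hd]
      have h3 : cprod β n < 1 / (y - x) := by
        rw [lt_div_iff₀ hyx]; linarith
      linarith
    · push_neg at hall
      classical
      obtain ⟨ℓ, hne, hpre⟩ : ∃ ℓ, greedy β x ℓ ≠ greedy β y ℓ ∧
          ∀ k, k < ℓ → greedy β x k = greedy β y k :=
        ⟨Nat.find hall, Nat.find_spec hall, fun k hk => by
          by_contra hc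
          exact absurd (Nat.find_le hc) (not_le.2 hk)⟩
      refine ⟨ℓ, hpre, ?_⟩
      have hle : (greedy β x ℓ : ℤ) ≤ (greedy β y ℓ : ℤ) := by
        cases ℓ with
        | zero =>
          rw [greedy_cast0 hb hx0, greedy_cast0 hb hy0]
          exact Int.floor_le_floor (by nlinarith [lt_trans one_pos (hb 0)])
        | succ n =>
          rw [greedy_castS hb n, greedy_castS hb n]
          have hd := rem_sub hb hx0 hy0 n (fun k hk => hpre k (Nat.lt_succ_of_le hk))
          have hcp : (0:ℝ) < cprod β n := cprod_pos hb n
          have hr : greedyRem β x n ≤ greedyRem β y n := by nlinarith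
          exact Int.floor_le_floor (by nlinarith [lt_trans one_pos (hb (n+1))])
      have hle' : greedy β x ℓ ≤ greedy β y ℓ := by exact_mod_cast hle
      exact lt_of_le_of_ne hle' hne
  · rintro ⟨ℓ, hpre, hlt⟩
    have hxeq := x_eq hb hx0 ℓ
    have hyeq := x_eq hb hy0 ℓ
    have hcp : (0:ℝ) < cprod β ℓ := cprod_pos hb ℓ
    have hps : ∑ k ∈ Finset.range ℓ, (greedy β y k : ℝ) / cprod β k
        = ∑ k ∈ Finset.range ℓ, (greedy β x k : ℝ) / cprod β k :=
      Finset.sum_congr rfl (fun k hk => by rw [hpre k (Finset.mem_range.1 hk)])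
    have hsum : ∑ k ∈ Finset.range (ℓ+1), (greedy β y k : ℝ) / cprod β k
        - ∑ k ∈ Finset.range (ℓ+1), (greedy β x k : ℝ) / cprod β k
        = ((greedy β y ℓ : ℝ) - (greedy β x ℓ : ℝ)) / cprod β ℓ := by
      rw [Finset.sum_range_succ, Finset.sum_range_succ, hps]
      ring
    have hdig : (greedy β x ℓ : ℝ) + 1 ≤ (greedy β y ℓ : ℝ) := by exact_mod_cast hlt
    have hrx : greedyRem β x ℓ < 1 := rem_lt_one ℓ
    have hry : (0:ℝ) ≤ greedyRem β y ℓ := rem_nonneg ℓ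
    have hxlt : greedyRem β x ℓ / cprod β ℓ < 1 / cprod β ℓ := by gcongr
    have hge : (1:ℝ) / cprod β ℓ ≤ ((greedy β y ℓ : ℝ) - (greedy β x ℓ : ℝ)) / cprod β ℓ := by
      gcongr
      linarith
    have hrem : (0:ℝ) ≤ greedyRem β y ℓ / cprod β ℓ := div_nonneg hry hcp.le
    linarith
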